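/- arXiv:2311.18534 — 2 statements merged into one kernel-verified Lean document; each statement's English description precedes it below -/
import Mathlib

section
/- Let E ⊂ ℝ² be a compact convex polygon with vertices v₁, …, v_N and edges the closed segments [vᵢ, vᵢ₊₁] (indices mod N), and let u : E → ℝ be continuous on E, harmonic on the interior of E, with the restriction of u to each closed edge agreeing with an affine function. If u(vᵢ) = 0 for every vertex vᵢ, then u is identically zero on E. -/
open RealInnerProductSpace

/-- `u` is harmonic on `U ⊆ ℝ²`: twice (continuously) differentiable on `U` with
`∂²u/∂x₁² + ∂²u/∂x₂² = 0` on `U`. -/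
def IsHarmonicOn (u : EuclideanSpace ℝ (Fin 2) → ℝ) (U : Set (EuclideanSpace ℝ (Fin 2))) : Prop :=
  ContDiffOn ℝ 2 u U ∧ ∀ x ∈ U,
    iteratedFDerivWithin ℝ 2 u U x
      ![EuclideanSpace.single (0 : Fin 2) (1 : ℝ), EuclideanSpace.single (0 : Fin 2) (1 : ℝ)] +
    iteratedFDerivWithin ℝ 2 u U x
      ![EuclideanSpace.single (1 : Fin 2) (1 : ℝ), EuclideanSpace.single (1 : Fin 2) (1 : ℝ)] = 0


/-- One-dimensional second derivative test at a local max. -/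
lemma aux_sd_nonpos {f f' : ℝ → ℝ} {c : ℝ}
    (hf : ∀ᶠ t in nhds (0:ℝ), HasDerivAt f (f' t) t)
    (hf' : HasDerivAt f' c 0) (hmax : IsLocalMax f 0) : c ≤ 0 := by
  by_contra hc
  push_neg at hc
  have h0 : f' 0 = 0 := hmax.hasDerivAt_eq_zero hf.self_of_nhds
  have hslope : Filter.Tendsto (slope f' 0) (nhdsWithin 0 {(0:ℝ)}ᶜ) (nhds c) :=
    hasDerivAt_iff_tendsto_slope.mp hf'
  have hpos : ∀ᶠ t in nhdsWithin 0 {(0:ℝ)}ᶜ, 0 < slope f' 0 t :=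
    hslope.eventually (eventually_gt_nhds hc)
  rw [eventually_nhdsWithin_iff] at hpos
  have hall : ∀ᶠ t in nhds (0:ℝ),
      HasDerivAt f (f' t) t ∧ f t ≤ f 0 ∧ (t ∈ ({(0:ℝ)}ᶜ : Set ℝ) → 0 < slope f' 0 t) :=
    hf.and (hmax.and hpos)
  obtain ⟨δ, hδ, hball⟩ := Metric.eventually_nhds_iff_ball.mp hall
  set r := δ/2 with hrdef
  have hr : 0 < r := by positivity
  have hmem : ∀ t ∈ Set.Icc (0:ℝ) r, t ∈ Metric.ball (0:ℝ) δ := by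
    intro t ht
    rw [Metric.mem_ball, Real.dist_eq, sub_zero, abs_of_nonneg ht.1]
    linarith [ht.2]
  have hmono : StrictMonoOn f (Set.Icc 0 r) := by
    apply strictMonoOn_of_deriv_pos (convex_Icc 0 r)
    · intro t ht
      exact ((hball t (hmem t ht)).1.differentiableAt.continuousAt).continuousWithinAt
    · intro t ht
      rw [interior_Icc] at ht
      have hb := hball t (hmem t ⟨le_of_lt ht.1, le_of_lt ht.2⟩)
      rw [hb.1.deriv]
      have hs := hb.2.2 (by simpa using ne_of_gt ht.1)
      rw [slope_def_field, h0, sub_zero, sub_zero] at hs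
      have h2 := mul_pos hs ht.1
      rwa [div_mul_cancel₀ _ (ne_of_gt ht.1)] at h2
  have h1 : f 0 < f r := hmono (Set.left_mem_Icc.2 (le_of_lt hr)) (Set.right_mem_Icc.2 (le_of_lt hr)) hr
  have h2 : f r ≤ f 0 := (hball r (hmem r (Set.right_mem_Icc.2 (le_of_lt hr)))).2.1
  linarith

lemma aux_line (u : EuclideanSpace ℝ (Fin 2) → ℝ) (x₀ e : EuclideanSpace ℝ (Fin 2))
    (he : ‖e‖ = 1) {ε : ℝ}
    (hu : ContDiffAt ℝ 2 u x₀)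
    (hmax : IsLocalMax (fun y => u y + ε * ‖y‖^2) x₀) :
    fderiv ℝ (fderiv ℝ u) x₀ e e + 2*ε ≤ 0 := by
  set L : ℝ → EuclideanSpace ℝ (Fin 2) := fun t => x₀ + t • e with hLdef
  have hL : ∀ t, HasDerivAt L e t := by
    intro t
    have h := ((hasDerivAt_id t).smul_const e).const_add x₀
    simpa [hLdef] using h
  have hLt : Filter.Tendsto L (nhds 0) (nhds x₀) := by
    have : Continuous L := continuous_const.add (continuous_id.smul continuous_const)
    have h0 : L 0 = x₀ := by simp [hLdef]
    exact h0 ▸ this.tendsto 0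
  have hev : ∀ᶠ y in nhds x₀, ContDiffAt ℝ 2 u y := hu.eventually (by norm_num)
  set f : ℝ → ℝ := fun t => u (L t) + ε * (‖x₀‖^2 + 2*⟪x₀, e⟫*t + t^2) with hfdef
  set f' : ℝ → ℝ := fun t => fderiv ℝ u (L t) e + ε * (2*⟪x₀, e⟫ + 2*t) with hf'def
  -- A : eventual first derivative
  have hA : ∀ᶠ t in nhds (0:ℝ), HasDerivAt f (f' t) t := by
    filter_upwards [hLt.eventually hev] with t hcd
    have hdu : DifferentiableAt ℝ u (L t) := hcd.differentiableAt two_ne_zero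
    have h1 : HasDerivAt (fun s => u (L s)) (fderiv ℝ u (L t) e) t :=
      hdu.hasFDerivAt.comp_hasDerivAt t (hL t)
    have h2 : HasDerivAt (fun s : ℝ => ε * (‖x₀‖^2 + 2*⟪x₀, e⟫*s + s^2))
        (ε * (2*⟪x₀, e⟫ + 2*t)) t := by
      have := (((hasDerivAt_const t (‖x₀‖^2)).add
        ((hasDerivAt_id t).const_mul (2*⟪x₀, e⟫))).add (hasDerivAt_pow 2 t)).const_mul ε
      exact this.congr_deriv (by rw [show (2:ℕ) - 1 = 1 from rfl]; push_cast; ring)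
    exact h1.add h2
  -- B : second derivative at 0
  have hD : DifferentiableAt ℝ (fderiv ℝ u) x₀ :=
    (hu.fderiv_right (m := 1) (by norm_num)).differentiableAt one_ne_zero
  have happly : HasFDerivAt (fun y => fderiv ℝ u y e)
      ((ContinuousLinearMap.apply ℝ ℝ e).comp (fderiv ℝ (fderiv ℝ u) x₀)) x₀ :=
    (ContinuousLinearMap.apply ℝ ℝ e).hasFDerivAt.comp x₀ hD.hasFDerivAt
  have hB : HasDerivAt f' (fderiv ℝ (fderiv ℝ u) x₀ e e + ε * 2) 0 := by
    have h1 : HasDerivAt (fun t => fderiv ℝ u (L t) e)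
        (fderiv ℝ (fderiv ℝ u) x₀ e e) 0 := by
      have h0 : L 0 = x₀ := by simp [hLdef]
      have happly' : HasFDerivAt (fun y => fderiv ℝ u y e)
          ((ContinuousLinearMap.apply ℝ ℝ e).comp (fderiv ℝ (fderiv ℝ u) x₀)) (L 0) := by
        rw [h0]; exact happly
      have := happly'.comp_hasDerivAt 0 (hL 0)
      exact this
    have h2 : HasDerivAt (fun t : ℝ => ε * (2*⟪x₀, e⟫ + 2*t)) (ε * 2) 0 := by
      have := ((hasDerivAt_const (0:ℝ) (2*⟪x₀, e⟫)).add ((hasDerivAt_id (0:ℝ)).const_mul 2)).const_mul ε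
      exact this.congr_deriv (by ring)
    exact h1.add h2
  -- C : local max of f at 0
  have hfeq : ∀ t, f t = u (L t) + ε * ‖L t‖^2 := by
    intro t
    have : ‖L t‖^2 = ‖x₀‖^2 + 2*⟪x₀, e⟫*t + t^2 := by
      rw [hLdef]
      simp only
      rw [norm_add_sq_real, real_inner_smul_right, norm_smul, mul_pow, he]
      simp [sq_abs]
      ring
    rw [hfdef]; simp only [this]
  have hC : IsLocalMax f 0 := by
    have h0 : L 0 = x₀ := by simp [hLdef]
    filter_upwards [hLt.eventually hmax] with t ht
    calc f t = u (L t) + ε * ‖L t‖^2 := hfeq t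
    _ ≤ u x₀ + ε * ‖x₀‖^2 := ht
    _ = f 0 := by rw [hfeq 0, h0]
  have := aux_sd_nonpos hA hB hC
  linarith

lemma aux_max (E : Set (EuclideanSpace ℝ (Fin 2))) (u : EuclideanSpace ℝ (Fin 2) → ℝ)
    (hcomp : IsCompact E)
    (hcont : ContinuousOn u E)
    (h2 : ∀ x ∈ interior E, ContDiffAt ℝ 2 u x ∧
      fderiv ℝ (fderiv ℝ u) x (EuclideanSpace.single 0 1) (EuclideanSpace.single 0 1)
      + fderiv ℝ (fderiv ℝ u) x (EuclideanSpace.single 1 1) (EuclideanSpace.single 1 1) = 0)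
    (hbd : ∀ x ∈ frontier E, u x ≤ 0) :
    ∀ x ∈ E, u x ≤ 0 := by
  intro x hx
  have hEne : E.Nonempty := ⟨x, hx⟩
  obtain ⟨C, hC⟩ := hcomp.isBounded.exists_norm_le
  have hC0 : 0 ≤ C := le_trans (norm_nonneg x) (hC x hx)
  have key : ∀ ε : ℝ, 0 < ε → u x ≤ ε * C^2 := by
    intro ε hε
    have hwcont : ContinuousOn (fun y => u y + ε * ‖y‖^2) E :=
      hcont.add ((continuous_const.mul ((continuous_norm).pow 2)).continuousOn)
    obtain ⟨x₀, hx₀E, hx₀max⟩ := hcomp.exists_isMaxOn hEne hwcont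
    have hx₀f : x₀ ∈ frontier E := by
      by_contra hfr
      have hx₀i : x₀ ∈ interior E := by
        rw [hcomp.isClosed.frontier_eq] at hfr
        simp only [Set.mem_diff, not_and, not_not] at hfr
        exact hfr hx₀E
      obtain ⟨hcd, hlap⟩ := h2 x₀ hx₀i
      have hloc : IsLocalMax (fun y => u y + ε * ‖y‖^2) x₀ := by
        filter_upwards [isOpen_interior.mem_nhds hx₀i] with y hy
        exact hx₀max (interior_subset hy)
      have ha := aux_line u x₀ (EuclideanSpace.single 0 1)
        (by rw [EuclideanSpace.norm_single]; norm_num) hcd hloc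
      have hb := aux_line u x₀ (EuclideanSpace.single 1 1)
        (by rw [EuclideanSpace.norm_single]; norm_num) hcd hloc
      linarith
    have h1 : u x ≤ u x + ε * ‖x‖^2 := by positivity |> fun h => le_add_of_nonneg_right h
    have h2' : u x + ε * ‖x‖^2 ≤ u x₀ + ε * ‖x₀‖^2 := hx₀max hx
    have h3 : u x₀ ≤ 0 := hbd x₀ hx₀f
    have h4 : ‖x₀‖ ≤ C := hC x₀ hx₀E
    have h5 : ‖x₀‖^2 ≤ C^2 := by nlinarith [norm_nonneg x₀]
    nlinarith
  by_contra h
  push_neg at h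
  have hkey := key (u x / (2*(C^2+1))) (by positivity)
  have h5 : u x / (2*(C^2+1)) * C^2 = u x * C^2 / (2*(C^2+1)) := by ring
  rw [h5, le_div_iff₀ (by positivity)] at hkey
  nlinarith

/-- unisolvence of the vertex degrees of freedom: let `E ⊆ ℝ²` be a compact
convex polygon with vertices `v 0, …, v (N-1)`, whose boundary is the union of the closed
edges `[v i, v (i+1)]`, and let `u` be continuous on `E`, harmonic on the interior of `E`,
and agreeing with an affine function on each closed edge. If `u` vanishes at every vertex,
then `u` vanishes identically on `E`. -/
theorem statement4 (N : ℕ) [NeZero N] (hN : 3 ≤ N)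
    (v : Fin N → EuclideanSpace ℝ (Fin 2))
    (E : Set (EuclideanSpace ℝ (Fin 2))) (hE : E = convexHull ℝ (Set.range v))
    (hbd : frontier E = ⋃ i : Fin N, segment ℝ (v i) (v (i + 1)))
    (u : EuclideanSpace ℝ (Fin 2) → ℝ)
    (hcont : ContinuousOn u E)
    (hharm : IsHarmonicOn u (interior E))
    (haff : ∀ i : Fin N, ∃ (a : EuclideanSpace ℝ (Fin 2)) (b : ℝ),
      ∀ x ∈ segment ℝ (v i) (v (i + 1)), u x = ⟪a, x⟫ + b)
    (hzero : ∀ i : Fin N, u (v i) = 0) :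
    ∀ x ∈ E, u x = 0 := by
  have hcomp : IsCompact E := by
    rw [hE]; exact (Set.finite_range v).isCompact_convexHull (𝕜 := ℝ)
  -- u vanishes on the frontier
  have hfr0 : ∀ x ∈ frontier E, u x = 0 := by
    intro x hx
    rw [hbd] at hx
    obtain ⟨i, hxi⟩ := Set.mem_iUnion.mp hx
    obtain ⟨a, b, hab⟩ := haff i
    have e1 : ⟪a, v i⟫ + b = 0 := by
      rw [← hab (v i) (left_mem_segment ℝ _ _)]; exact hzero i
    have e2 : ⟪a, v (i+1)⟫ + b = 0 := by
      rw [← hab (v (i+1)) (right_mem_segment ℝ _ _)]; exact hzero (i+1)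
    have hseg := hxi
    obtain ⟨α, β, hα, hβ, hs, hxeq⟩ := hxi
    have hin : ⟪a, x⟫ = α * ⟪a, v i⟫ + β * ⟪a, v (i+1)⟫ := by
      rw [← hxeq, inner_add_right, real_inner_smul_right, real_inner_smul_right]
    rw [hab x hseg, hin]
    linear_combination α * e1 + β * e2 - b * hs
  -- laplacian in fderiv form
  have h2 : ∀ x ∈ interior E, ContDiffAt ℝ 2 u x ∧
      fderiv ℝ (fderiv ℝ u) x (EuclideanSpace.single 0 1) (EuclideanSpace.single 0 1)
      + fderiv ℝ (fderiv ℝ u) x (EuclideanSpace.single 1 1) (EuclideanSpace.single 1 1) = 0 := by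
    intro x hxi
    refine ⟨hharm.1.contDiffAt (isOpen_interior.mem_nhds hxi), ?_⟩
    have hl := hharm.2 x hxi
    rw [iteratedFDerivWithin_of_isOpen 2 isOpen_interior hxi] at hl
    rw [iteratedFDeriv_two_apply, iteratedFDeriv_two_apply] at hl
    simpa using hl
  -- apply the maximum principle to u and -u
  have hle := aux_max E u hcomp hcont h2 (fun x hx => le_of_eq (hfr0 x hx))
  have h2n : ∀ x ∈ interior E, ContDiffAt ℝ 2 (fun y => -(u y)) x ∧
      fderiv ℝ (fderiv ℝ (fun y => -(u y))) x (EuclideanSpace.single 0 1) (EuclideanSpace.single 0 1)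
      + fderiv ℝ (fderiv ℝ (fun y => -(u y))) x (EuclideanSpace.single 1 1) (EuclideanSpace.single 1 1) = 0 := by
    intro x hxi
    obtain ⟨hcd, hlap⟩ := h2 x hxi
    refine ⟨hcd.neg, ?_⟩
    have hfd : fderiv ℝ (fun y => -(u y)) = fun y => -(fderiv ℝ u y) := by
      funext y; exact fderiv_neg
    rw [hfd, fderiv_fun_neg]
    simp only [ContinuousLinearMap.neg_apply]
    linarith
  have hge := aux_max E (fun y => -(u y)) hcomp hcont.neg h2n
    (fun x hx => by simp only [neg_nonpos]; rw [hfr0 x hx])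
  intro x hx
  have ha := hle x hx
  have hb := hge x hx
  simp only [neg_nonpos] at hb
  linarith
end

section
/- Let V be a real inner product space, W ⊆ V a complete subspace, and P : V → V the orthogonal projection onto W. Let s : V → V → ℝ be a symmetric bilinear form and α⋆, α⋆⋆ positive real constants such that α⋆‖w‖² ≤ s(w, w) ≤ α⋆⋆‖w‖² for every w in the orthogonal complement of W. Define a_h(u, v) = ⟪P u, P v⟫ + s(u − P u, v − P v). Then for every v ∈ V, min(1, α⋆)·‖v‖² ≤ a_h(v, v) ≤ max(1, α⋆⋆)·‖v‖². -/
open RealInnerProductSpace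

/-- spectral equivalence / coercivity of the VEM discrete bilinear form:
let `V` be a real inner product space, `W` a complete subspace with orthogonal projection
`P`, and `s` a symmetric bilinear form with `α⋆‖w‖² ≤ s w w ≤ α⋆⋆‖w‖²` for every `w` in
the orthogonal complement of `W`, where `α⋆, α⋆⋆ > 0`. Then with
`a_h u v = ⟪P u, P v⟫ + s (u - P u) (v - P v)` one has
`min 1 α⋆ · ‖v‖² ≤ a_h v v ≤ max 1 α⋆⋆ · ‖v‖²` for every `v ∈ V`. -/
theorem statement7 {V : Type*} [NormedAddCommGroup V] [InnerProductSpace ℝ V]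
    (W : Submodule ℝ V) [CompleteSpace W]
    (s : V →ₗ[ℝ] V →ₗ[ℝ] ℝ) (hsymm : ∀ u v : V, s u v = s v u)
    (αl αu : ℝ) (hαl : 0 < αl) (hαu : 0 < αu)
    (hs : ∀ w ∈ Wᗮ, αl * ‖w‖ ^ 2 ≤ s w w ∧ s w w ≤ αu * ‖w‖ ^ 2) :
    ∀ v : V,
      min 1 αl * ‖v‖ ^ 2 ≤
        ⟪(Submodule.orthogonalProjectionOnto W v : V), (Submodule.orthogonalProjectionOnto W v : V)⟫ +
          s (v - Submodule.orthogonalProjectionOnto W v) (v - Submodule.orthogonalProjectionOnto W v) ∧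
      ⟪(Submodule.orthogonalProjectionOnto W v : V), (Submodule.orthogonalProjectionOnto W v : V)⟫ +
          s (v - Submodule.orthogonalProjectionOnto W v) (v - Submodule.orthogonalProjectionOnto W v) ≤
        max 1 αu * ‖v‖ ^ 2 := by
  intro v
  set p : V := (Submodule.orthogonalProjectionOnto W v : V) with hp
  set w : V := v - p with hw
  have hwmem : w ∈ Wᗮ := Submodule.sub_starProjection_mem_orthogonal (K := W) v
  have hperp : ⟪p, w⟫ = 0 := by
    exact hwmem p (Submodule.orthogonalProjectionOnto W v).2
  have hpyth : ‖v‖ ^ 2 = ‖p‖ ^ 2 + ‖w‖ ^ 2 := by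
    have hv : v = p + w := by simp [hw]
    rw [hv, ← real_inner_self_eq_norm_sq, ← real_inner_self_eq_norm_sq,
      ← real_inner_self_eq_norm_sq, inner_add_add_self, hperp, show ⟪w, p⟫ = (0:ℝ) from by rw [real_inner_comm]; exact hperp]
    ring
  have hinner : ⟪p, p⟫ = ‖p‖ ^ 2 := real_inner_self_eq_norm_sq p
  obtain ⟨h1, h2⟩ := hs w hwmem
  constructor
  · have hmin1 : min 1 αl ≤ 1 := min_le_left _ _
    have hmin2 : min 1 αl ≤ αl := min_le_right _ _
    nlinarith [sq_nonneg ‖p‖, sq_nonneg ‖w‖]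
  · have hmax1 : (1:ℝ) ≤ max 1 αu := le_max_left _ _
    have hmax2 : αu ≤ max 1 αu := le_max_right _ _
    nlinarith [sq_nonneg ‖p‖, sq_nonneg ‖w‖]
end
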